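/- Let Σ'_{-i} ⊆ Σ_{-i} be nonempty and let σ ∈ Σ_i. Then σ is not weakly dominated by any mixed strategy of player i with respect to Σ'_{-i} if and only if there exists a probability distribution μ on Σ_{-i} whose support is exactly Σ'_{-i} such that σ is a best response to μ. -/

import Mathlib

open scoped BigOperators

noncomputable section

/-- A probability distribution on a finite type, represented as a weight function. -/
def IsDist {α : Type*} [Fintype α] (p : α → ℝ) : Prop :=
  (∀ a, 0 ≤ p a) ∧ ∑ a, p a = 1

/-- The probability of a set under a weight function. -/
def probOf {α : Type*} [Fintype α] (p : α → ℝ) (E : Set α) : ℝ :=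
  ∑ a, E.indicator p a

/-- A finite normal-form game with `n` players, all utilities in `[0,1]`. -/
structure Game (n : ℕ) where
  S : Fin n → Type
  fintypeS : ∀ i, Fintype (S i)
  decEqS : ∀ i, DecidableEq (S i)
  nonemptyS : ∀ i, Nonempty (S i)
  u : (i : Fin n) → ((j : Fin n) → S j) → ℝ
  u_mem : ∀ i σ, u i σ ∈ Set.Icc (0 : ℝ) 1

attribute [instance] Game.fintypeS Game.decEqS Game.nonemptyS

namespace Game

variable {n : ℕ}

abbrev Prof (G : Game n) : Type := (j : Fin n) → G.S j

abbrev OppProf (G : Game n) (i : Fin n) : Type := (j : {j : Fin n // j ≠ i}) → G.S j.val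

def stratOpp (G : Game n) (i : Fin n) (σ : G.Prof) : G.OppProf i := fun j => σ j.val

def combine (G : Game n) (i : Fin n) (s : G.S i) (τ : G.OppProf i) : G.Prof :=
  fun j => if h : j = i then cast (congrArg G.S h.symm) s else τ ⟨j, h⟩

/-- Expected utility of strategy `s` of player `i` under belief `b` on opponents' profiles. -/
def EU (G : Game n) (i : Fin n) (s : G.S i) (b : G.OppProf i → ℝ) : ℝ :=
  ∑ τ : G.OppProf i, b τ * G.u i (G.combine i s τ)

/-- `s` is a best response to the belief `b`. -/
def BR (G : Game n) (i : Fin n) (s : G.S i) (b : G.OppProf i → ℝ) : Prop :=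
  ∀ s' : G.S i, G.EU i s' b ≤ G.EU i s b

/-- Utility of mixed strategy `m` of player `i` against opponents' profile `τ`. -/
def EUmix (G : Game n) (i : Fin n) (m : G.S i → ℝ) (τ : G.OppProf i) : ℝ :=
  ∑ s : G.S i, m s * G.u i (G.combine i s τ)

/-- `s` is weakly dominated by the mixed strategy `m` with respect to `T`. -/
def WDom (G : Game n) (i : Fin n) (m : G.S i → ℝ) (s : G.S i)
    (T : Set (G.OppProf i)) : Prop :=
  (∀ τ ∈ T, G.u i (G.combine i s τ) ≤ G.EUmix i m τ) ∧
    ∃ τ ∈ T, G.u i (G.combine i s τ) < G.EUmix i m τ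

/-- `s` is strongly dominated by the mixed strategy `m` with respect to `T`. -/
def SDom (G : Game n) (i : Fin n) (m : G.S i → ℝ) (s : G.S i)
    (T : Set (G.OppProf i)) : Prop :=
  ∀ τ ∈ T, G.u i (G.combine i s τ) < G.EUmix i m τ

/-- Strategies of player `i` surviving `k` rounds of iterated deletion of weakly
dominated strategies. -/
def NWD (G : Game n) : ℕ → (i : Fin n) → Set (G.S i)
  | 0 => fun _ => Set.univ
  | k + 1 => fun i =>
      {s | s ∈ NWD G k i ∧
        ¬∃ m : G.S i → ℝ, IsDist m ∧
          G.WDom i m s {τ : G.OppProf i | ∀ j, τ j ∈ NWD G k j.val}}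

/-- Strategies of player `i` surviving `k` rounds of iterated deletion of strongly
dominated strategies. -/
def NSD (G : Game n) : ℕ → (i : Fin n) → Set (G.S i)
  | 0 => fun _ => Set.univ
  | k + 1 => fun i =>
      {s | s ∈ NSD G k i ∧
        ¬∃ m : G.S i → ℝ, IsDist m ∧
          G.SDom i m s {τ : G.OppProf i | ∀ j, τ j ∈ NSD G k j.val}}

end Game

open MeasureTheory in
/-- A probability structure appropriate for the game `G`. -/
structure PStruct {n : ℕ} (G : Game n) where
  Ω : Type
  meas : MeasurableSpace Ω
  strat : Ω → G.Prof
  PR : Fin n → Ω → @Measure Ω meas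
  PR_prob : ∀ i ω, @IsProbabilityMeasure Ω meas (PR i ω)
  strat_meas : ∀ (j : Fin n) (s : G.S j), MeasurableSet[meas] {ω | strat ω j = s}
  PR_own_strat : ∀ i ω, PR i ω {ω' | strat ω' i = strat ω i} = 1
  PR_meas : ∀ (i : Fin n) (π : @Measure Ω meas), MeasurableSet[meas] {ω | PR i ω = π}
  PR_own_PR : ∀ i ω, PR i ω {ω' | PR i ω' = PR i ω} = 1

namespace PStruct

variable {n : ℕ} {G : Game n}

/-- The belief on opponents' strategy profiles induced by `PR i ω`. -/
def belief (M : PStruct G) (i : Fin n) (ω : M.Ω) : G.OppProf i → ℝ :=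
  fun τ => (M.PR i ω {ω' | G.stratOpp i (M.strat ω') = τ}).toReal

/-- `(M,ω) ⊨ RAT_i`. -/
def RATi (M : PStruct G) (i : Fin n) (ω : M.Ω) : Prop :=
  G.BR i (M.strat ω i) (M.belief i ω)

/-- `(M,ω) ⊨ B_i E`. -/
def Bel (M : PStruct G) (i : Fin n) (ω : M.Ω) (E : Set M.Ω) : Prop :=
  ∃ F, @MeasurableSet M.Ω M.meas F ∧ F ⊆ E ∧ M.PR i ω F = 1

/-- `(M,ω) ⊨ ⟨B_i⟩ E`. -/
def BelPos (M : PStruct G) (i : Fin n) (ω : M.Ω) (E : Set M.Ω) : Prop :=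
  ∃ F, @MeasurableSet M.Ω M.meas F ∧ F ⊆ E ∧ 0 < M.PR i ω F

end PStruct

/-- The events `RATzero^k_i(M)`, defined simultaneously for all appropriate structures. -/
def RATzero {n : ℕ} (G : Game n) : (k : ℕ) → (M : PStruct G) → Fin n → Set M.Ω
  | 0, _, _ => Set.univ
  | k + 1, M, i =>
      {ω | M.RATi i ω ∧
        M.Bel i ω {ω' | ∃ M' : PStruct G, ∃ ω'' : M'.Ω,
          M'.strat ω'' i = M.strat ω' i ∧ ω'' ∈ RATzero G k M' i} ∧
        M.Bel i ω {ω' | ∀ j, j ≠ i → ω' ∈ RATzero G k M j} ∧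
        ∀ j, j ≠ i → ∀ s : G.S j,
          (∃ M' : PStruct G, ∃ ω' : M'.Ω, M'.strat ω' j = s ∧
              ∀ j', j' ≠ i → ω' ∈ RATzero G k M' j') →
            M.BelPos i ω {ω'' | M.strat ω'' j = s}}

/-- The events `RAT^k_i(M)`. -/
def RATk {n : ℕ} (G : Game n) (M : PStruct G) : (k : ℕ) → Fin n → Set M.Ω
  | 0, _ => Set.univ
  | k + 1, i => {ω | M.RATi i ω ∧ M.Bel i ω {ω' | ∀ j, j ≠ i → ω' ∈ RATk G M k j}}

/-- The event that every player is rational. -/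
def RATall {n : ℕ} {G : Game n} (M : PStruct G) : Set M.Ω := {ω | ∀ j, M.RATi j ω}

/-- The "everyone believes" operator iterated `k` times. -/
def Ek {n : ℕ} {G : Game n} (M : PStruct G) : ℕ → Set M.Ω → Set M.Ω
  | 0, X => X
  | k + 1, X => {ω | ∀ j, M.Bel j ω (Ek M k X)}

/-- `σ` is a rationalizable strategy for player `i`. -/
def Rationalizable {n : ℕ} (G : Game n) (i : Fin n) (σ : G.S i) : Prop :=
  ∃ Z : (j : Fin n) → Set (G.S j),
    σ ∈ Z i ∧
    ∀ j, ∀ σ' ∈ Z j, ∃ μ : G.OppProf j → ℝ, IsDist μ ∧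
      (∀ τ, 0 < μ τ → ∀ j', τ j' ∈ Z j'.val) ∧ G.BR j σ' μ

/-- `σ` is rationalizable′ for player `i`. -/
def Rationalizable' {n : ℕ} (G : Game n) (i : Fin n) (σ : G.S i) : Prop :=
  ∃ X : ℕ → (j : Fin n) → Set (G.S j),
    (∀ j, X 0 j = Set.univ) ∧
    (∀ (k : ℕ) (j : Fin n), ∀ σ' ∈ X (k + 1) j, ∃ μ : G.OppProf j → ℝ, IsDist μ ∧
      (∀ τ, 0 < μ τ → ∀ j', τ j' ∈ X k j'.val) ∧ G.BR j σ' μ) ∧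
    ∀ k, σ ∈ X k i

end

section PearceAux

open Finset


variable {E : Type*} [NormedAddCommGroup E] [NormedSpace ℝ E] [FiniteDimensional ℝ E]

/-- The set of nonnegative combinations of a `Fin n`-indexed family is closed. -/
lemma isClosed_nonnegCombos_fin :
    ∀ (n : ℕ) (v : Fin n → E),
      IsClosed {x : E | ∃ l : Fin n → ℝ, (∀ j, 0 ≤ l j) ∧ x = ∑ j, l j • v j} := by
  intro n
  induction n using Nat.strong_induction_on with
  | _ n ih =>
    intro v
    by_cases hli : LinearIndependent ℝ v
    · -- linearly independent case: closed embedding image of a closed set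
      let L : (Fin n → ℝ) →ₗ[ℝ] E := Fintype.linearCombination ℝ v
      have hL : ∀ l : Fin n → ℝ, L l = ∑ j, l j • v j := by
        intro l; simp [L, Fintype.linearCombination_apply]
      have hker : LinearMap.ker L = ⊥ := by
        rw [LinearMap.ker_eq_bot']
        intro l hl
        rw [Fintype.linearIndependent_iff] at hli
        funext j
        exact hli l (by rw [← hL]; exact hl) j
      have hce := LinearMap.isClosedEmbedding_of_injective hker
      have hset : {x : E | ∃ l : Fin n → ℝ, (∀ j, 0 ≤ l j) ∧ x = ∑ j, l j • v j}
          = L '' {l | ∀ j, 0 ≤ l j} := by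
        ext x
        constructor
        · rintro ⟨l, hl, rfl⟩; exact ⟨l, hl, (hL l)⟩
        · rintro ⟨l, hl, rfl⟩; exact ⟨l, hl, (hL l).symm⟩
      rw [hset]
      refine hce.isClosedMap _ ?_
      have : {l : Fin n → ℝ | ∀ j, 0 ≤ l j} = ⋂ j, {l : Fin n → ℝ | 0 ≤ l j} := by
        ext; simp [Set.mem_iInter]
      rw [this]
      exact isClosed_iInter fun j => isClosed_le continuous_const (continuous_apply j)
    · -- linearly dependent case
      rcases n with _ | m
      · exact absurd linearIndependent_empty_type hli
      rw [Fintype.not_linearIndependent_iff] at hli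
      obtain ⟨c, hc0, i0, hi0⟩ := hli
      -- reduce to the case where some coefficient is positive
      have key : ∀ c : Fin (m + 1) → ℝ, (∑ j, c j • v j = 0) → (∃ j, 0 < c j) →
          {x : E | ∃ l : Fin (m + 1) → ℝ, (∀ j, 0 ≤ l j) ∧ x = ∑ j, l j • v j}
            = ⋃ p : Fin (m + 1),
              {x : E | ∃ l' : Fin m → ℝ, (∀ j, 0 ≤ l' j) ∧
                x = ∑ j, l' j • v (p.succAbove j)} := by
        intro c hc ⟨jp, hjp⟩
        ext x
        simp only [Set.mem_iUnion, Set.mem_setOf_eq]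
        constructor
        · rintro ⟨l, hl, rfl⟩
          set s : Finset (Fin (m + 1)) := Finset.univ.filter (fun j => 0 < c j) with hs
          have hsne : s.Nonempty := ⟨jp, by simp [hs, hjp]⟩
          obtain ⟨p, hps, hpmin⟩ := s.exists_mem_eq_inf' hsne (fun j => l j / c j)
          have hcp : 0 < c p := by simpa [hs] using hps
          set t : ℝ := l p / c p with ht
          have ht0 : 0 ≤ t := div_nonneg (hl p) hcp.le
          have hnonneg : ∀ j, 0 ≤ l j - t * c j := by
            intro j
            rcases le_or_gt (c j) 0 with hcj | hcj
            · have : t * c j ≤ 0 := mul_nonpos_of_nonneg_of_nonpos ht0 hcj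
              linarith [hl j]
            · have hjs : j ∈ s := by simp [hs, hcj]
              have : t ≤ l j / c j := hpmin ▸ Finset.inf'_le _ hjs
              rw [le_div_iff₀ hcj] at this
              linarith
          have hzero : l p - t * c p = 0 := by
            rw [ht, div_mul_cancel₀ _ hcp.ne', sub_self]
          refine ⟨p, fun j => l (p.succAbove j) - t * c (p.succAbove j),
            fun j => hnonneg _, ?_⟩
          have hsum : ∑ j, (l j - t * c j) • v j = ∑ j, l j • v j := by
            simp only [sub_smul, Finset.sum_sub_distrib, mul_smul]
            rw [← Finset.smul_sum, hc, smul_zero, sub_zero]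
          calc ∑ j, l j • v j = ∑ j, (l j - t * c j) • v j := hsum.symm
            _ = (l p - t * c p) • v p
                + ∑ j, (l (p.succAbove j) - t * c (p.succAbove j)) • v (p.succAbove j) :=
              Fin.sum_univ_succAbove (fun j => (l j - t * c j) • v j) p
            _ = ∑ j, (l (p.succAbove j) - t * c (p.succAbove j)) • v (p.succAbove j) := by
              rw [hzero, zero_smul, zero_add]
        · rintro ⟨p, l', hl', rfl⟩
          refine ⟨p.insertNth 0 l', ?_, ?_⟩
          · intro j
            rcases eq_or_ne j p with rfl | hj
            · simp
            · obtain ⟨k, rfl⟩ := Fin.exists_succAbove_eq hj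
              simpa using hl' k
          · rw [Fin.sum_univ_succAbove (fun j => (p.insertNth 0 l' : Fin (m+1) → ℝ) j • v j) p]
            simp
      rcases lt_or_gt_of_ne hi0 with hneg | hpos
      · have hc' : ∑ j, (-c) j • v j = 0 := by simp [hc0]
        rw [key (-c) hc' ⟨i0, by simpa using hneg⟩]
        exact isClosed_iUnion_of_finite fun p =>
          ih m (Nat.lt_succ_self m) (fun j => v (p.succAbove j))
      · rw [key c hc0 ⟨i0, hpos⟩]
        exact isClosed_iUnion_of_finite fun p =>
          ih m (Nat.lt_succ_self m) (fun j => v (p.succAbove j))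

/-- The set of nonnegative combinations of a finite family is closed. -/
lemma isClosed_nonnegCombos {ι : Type*} [Fintype ι] (v : ι → E) :
    IsClosed {x : E | ∃ l : ι → ℝ, (∀ j, 0 ≤ l j) ∧ x = ∑ j, l j • v j} := by
  classical
  obtain ⟨e⟩ := Fintype.truncEquivFin ι
  have h := isClosed_nonnegCombos_fin (Fintype.card ι) (v ∘ e.symm)
  convert h using 1
  ext x
  constructor
  · rintro ⟨l, hl, rfl⟩
    exact ⟨l ∘ e.symm, fun j => hl _, by
      rw [← Equiv.sum_comp e.symm (fun j => l j • v j)]; rfl⟩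
  · rintro ⟨l, hl, rfl⟩
    refine ⟨l ∘ e, fun j => hl _, ?_⟩
    rw [← Equiv.sum_comp e.symm (fun j => (l ∘ e) j • v j)]
    simp



/-- Separation core: if the cone of the `w s` meets the nonnegative orthant only at `0`
(in the coordinates `T`, outside of which all `w s` vanish), then there is a probability
vector with support exactly `T` against which every `w s` has nonpositive expectation. -/
lemma cone_separation {κ ι : Type*} [Fintype κ] [Fintype ι]
    (w : ι → κ → ℝ) (T : Set κ) (hT : T.Nonempty)
    (hsupp : ∀ s, ∀ τ ∉ T, w s τ = 0)
    (hdisj : ∀ l : ι → ℝ, (∀ s, 0 ≤ l s) →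
      (∀ τ, 0 ≤ ∑ s, l s * w s τ) → ∀ τ, ∑ s, l s * w s τ = 0) :
    ∃ μ : κ → ℝ, (∀ τ, 0 ≤ μ τ) ∧ (∀ τ, 0 < μ τ ↔ τ ∈ T) ∧ (∑ τ, μ τ = 1) ∧
      ∀ s, ∑ τ, μ τ * w s τ ≤ 0 := by
  classical
  set K : Set (κ → ℝ) := {x | ∃ l : ι → ℝ, (∀ j, 0 ≤ l j) ∧ x = ∑ j, l j • w j} with hK
  have hcoord : ∀ (l : ι → ℝ) (τ : κ), (∑ j, l j • w j) τ = ∑ j, l j * w j τ := by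
    intro l τ
    rw [Finset.sum_apply]
    rfl
  have hKclosed : IsClosed K := isClosed_nonnegCombos w
  have hKconvex : Convex ℝ K := by
    rintro x ⟨lx, hlx, rfl⟩ y ⟨ly, hly, rfl⟩ a b ha hb hab
    refine ⟨fun s => a * lx s + b * ly s,
      fun s => add_nonneg (mul_nonneg ha (hlx s)) (mul_nonneg hb (hly s)), ?_⟩
    rw [Finset.smul_sum, Finset.smul_sum, ← Finset.sum_add_distrib]
    congr 1; funext s
    rw [add_smul, smul_smul, smul_smul]
  set Q : Set (κ → ℝ) := {x | ∀ τ ∉ T, x τ = 0} with hQ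
  have hQclosed : IsClosed Q := by
    have : Q = ⋂ τ, ⋂ (_ : τ ∉ T), {x : κ → ℝ | x τ = 0} := by
      ext x; simp [hQ, Set.mem_iInter]
    rw [this]
    exact isClosed_iInter fun τ => isClosed_iInter fun _ =>
      isClosed_eq (continuous_apply τ) continuous_const
  set Δ : Set (κ → ℝ) := stdSimplex ℝ κ ∩ Q with hΔ
  have hΔcompact : IsCompact Δ := (isCompact_stdSimplex ℝ κ).inter_right hQclosed
  have hΔconvex : Convex ℝ Δ := (convex_stdSimplex ℝ κ).inter (by
    rintro x hx y hy a b _ _ _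
    intro τ hτ
    simp [hx τ hτ, hy τ hτ])
  have hdisjKΔ : Disjoint K Δ := by
    rw [Set.disjoint_left]
    rintro x ⟨l, hl, rfl⟩ ⟨hstd, hsupp0⟩
    have hzero : ∀ τ, (∑ j, l j • w j) τ = 0 := by
      intro τ
      rw [hcoord]
      exact hdisj l hl (fun τ' => (hcoord l τ') ▸ hstd.1 τ') τ
    have : (1 : ℝ) = 0 := by
      rw [← hstd.2]
      exact Finset.sum_eq_zero fun τ _ => hzero τ
    norm_num at this
  obtain ⟨f, u, v, hfK, huv, hfΔ⟩ :=
    geometric_hahn_banach_closed_compact hKconvex hKclosed hΔconvex hΔcompact hdisjKΔ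
  have h0K : (0 : κ → ℝ) ∈ K := ⟨0, fun _ => le_refl 0, by simp⟩
  have hu0 : 0 < u := by have := hfK 0 h0K; simpa using this
  have hKle : ∀ x ∈ K, f x ≤ 0 := by
    rintro x ⟨l, hl, rfl⟩
    by_contra hpos
    push_neg at hpos
    have hmem : ((u + 1) / f (∑ j, l j • w j)) • (∑ j, l j • w j) ∈ K := by
      refine ⟨fun s => ((u + 1) / f (∑ j, l j • w j)) * l s,
        fun s => mul_nonneg (div_nonneg (by linarith) hpos.le) (hl s), ?_⟩
      rw [Finset.smul_sum]
      congr 1; funext s; rw [smul_smul]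
    have := hfK _ hmem
    rw [map_smul, smul_eq_mul, div_mul_cancel₀ _ hpos.ne'] at this
    linarith
  -- basis vectors
  set δ : κ → (κ → ℝ) := fun τ τ' => if τ' = τ then (1 : ℝ) else 0 with hδ
  have hδΔ : ∀ τ ∈ T, δ τ ∈ Δ := by
    intro τ hτ
    refine ⟨⟨fun τ' => by show (0:ℝ) ≤ if τ' = τ then 1 else 0; split <;> norm_num, ?_⟩, ?_⟩
    · simp [hδ]
    · intro τ' hτ'
      have : τ' ≠ τ := fun h => hτ' (h ▸ hτ)
      simp [hδ, this]
  have hfx : ∀ x : κ → ℝ, f x = ∑ τ, x τ * f (δ τ) := by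
    intro x
    have hxe : x = ∑ τ, x τ • δ τ := by
      funext τ'
      rw [Finset.sum_apply]
      simp [hδ, Finset.sum_ite_eq]
    conv_lhs => rw [hxe]
    rw [map_sum]
    congr 1; funext τ; rw [map_smul, smul_eq_mul]
  have hpos : ∀ τ ∈ T, 0 < f (δ τ) := fun τ hτ => lt_trans (lt_trans hu0 huv) (hfΔ _ (hδΔ τ hτ))
  obtain ⟨τ₁, hτ₁⟩ := hT
  set Z : ℝ := ∑ τ, (if τ ∈ T then f (δ τ) else 0) with hZ
  have hZpos : 0 < Z := by
    refine Finset.sum_pos' (fun τ _ => ?_) ⟨τ₁, Finset.mem_univ _, by simp [hτ₁, hpos τ₁ hτ₁]⟩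
    split
    · exact (hpos _ (by assumption)).le
    · exact le_refl 0
  refine ⟨fun τ => if τ ∈ T then f (δ τ) / Z else 0, ?_, ?_, ?_, ?_⟩
  · intro τ
    show 0 ≤ if τ ∈ T then f (δ τ) / Z else 0
    split
    · exact (div_pos (hpos _ (by assumption)) hZpos).le
    · exact le_refl 0
  · intro τ
    constructor
    · intro h
      by_contra hτ
      simp [hτ] at h
    · intro hτ
      simp only [hτ, if_pos]
      exact div_pos (hpos _ hτ) hZpos
  · rw [show ∑ τ, (if τ ∈ T then f (δ τ) / Z else 0) = (∑ τ, (if τ ∈ T then f (δ τ) else 0)) / Z by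
      rw [Finset.sum_div]; exact Finset.sum_congr rfl fun τ _ => by split <;> simp]
    rw [← hZ, div_self hZpos.ne']
  · intro s
    have hws : (fun τ => w s τ) ∈ K := by
      refine ⟨fun j => if j = s then 1 else 0,
        fun j => by show (0:ℝ) ≤ if j = s then 1 else 0; split <;> norm_num, ?_⟩
      funext τ
      rw [hcoord]
      simp [Finset.sum_ite_eq']
    have hfws : f (w s) ≤ 0 := hKle _ hws
    have : ∑ τ, (if τ ∈ T then f (δ τ) / Z else 0) * w s τ = f (w s) / Z := by
      rw [hfx (w s), Finset.sum_div]
      refine Finset.sum_congr rfl fun τ _ => ?_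
      by_cases hτ : τ ∈ T
      · simp only [hτ, if_pos]; ring
      · simp [hτ, hsupp s τ hτ]
    rw [this]
    exact div_nonpos_of_nonpos_of_nonneg hfws hZpos.le

end PearceAux

/-- Pearce: `σ` is not weakly dominated by any mixed strategy with respect
to a nonempty `T ⊆ Σ_{-i}` iff it is a best response to some belief with support exactly `T`. -/
theorem not_weakly_dominated_iff_best_response_full_support {n : ℕ} (G : Game n) (i : Fin n)
    (T : Set (G.OppProf i)) (hT : T.Nonempty) (σ : G.S i) :
    (¬∃ m : G.S i → ℝ, IsDist m ∧ G.WDom i m σ T) ↔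
      ∃ μ : G.OppProf i → ℝ, IsDist μ ∧ (∀ τ, 0 < μ τ ↔ τ ∈ T) ∧ G.BR i σ μ := by
  classical
  constructor
  · -- hard direction: undominated → best response to full-support belief
    intro h
    set g : G.S i → G.OppProf i → ℝ :=
      fun s τ => G.u i (G.combine i s τ) - G.u i (G.combine i σ τ) with hg
    set w : G.S i → G.OppProf i → ℝ := fun s τ => if τ ∈ T then g s τ else 0 with hw
    have hsupp : ∀ s, ∀ τ ∉ T, w s τ = 0 := fun s τ hτ => by simp [hw, hτ]
    have hdisj : ∀ l : G.S i → ℝ, (∀ s, 0 ≤ l s) →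
        (∀ τ, 0 ≤ ∑ s, l s * w s τ) → ∀ τ, ∑ s, l s * w s τ = 0 := by
      intro l hl hnn
      by_contra hne
      push_neg at hne
      obtain ⟨τ', hτ'⟩ := hne
      have hτ'pos : 0 < ∑ s, l s * w s τ' := lt_of_le_of_ne (hnn τ') (Ne.symm hτ')
      have hτ'T : τ' ∈ T := by
        by_contra hτ'T
        refine hτ' (Finset.sum_eq_zero fun s _ => ?_)
        rw [hsupp s τ' hτ'T, mul_zero]
      have hZpos : 0 < ∑ s, l s := by
        rcases lt_or_ge 0 (∑ s, l s) with hZ | hZ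
        · exact hZ
        · exfalso
          have hZ0 : (∑ s, l s) = 0 := le_antisymm hZ (Finset.sum_nonneg fun s _ => hl s)
          have : ∀ s ∈ Finset.univ, l s = 0 :=
            (Finset.sum_eq_zero_iff_of_nonneg fun s _ => hl s).1 hZ0
          refine hτ' (Finset.sum_eq_zero fun s hs => ?_)
          rw [this s hs, zero_mul]
      set Z : ℝ := ∑ s, l s with hZ
      have key : ∀ τ ∈ T, G.EUmix i (fun s => l s / Z) τ - G.u i (G.combine i σ τ)
          = (∑ s, l s * w s τ) / Z := by
        intro τ hτ
        have h1 : G.u i (G.combine i σ τ) = ∑ s, (l s / Z) * G.u i (G.combine i σ τ) := by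
          rw [← Finset.sum_mul, ← Finset.sum_div, ← hZ, div_self hZpos.ne', one_mul]
        rw [Game.EUmix, h1, ← Finset.sum_sub_distrib, Finset.sum_div]
        refine Finset.sum_congr rfl fun s _ => ?_
        rw [hw]
        simp only [hτ, if_pos, hg]
        ring
      refine h ⟨fun s => l s / Z,
        ⟨fun s => div_nonneg (hl s) hZpos.le, by rw [← Finset.sum_div, ← hZ, div_self hZpos.ne']⟩,
        ?_, τ', hτ'T, ?_⟩
      · intro τ hτ
        have := key τ hτ
        have h0 : 0 ≤ (∑ s, l s * w s τ) / Z := div_nonneg (hnn τ) hZpos.le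
        linarith
      · have := key τ' hτ'T
        have h0 : 0 < (∑ s, l s * w s τ') / Z := div_pos hτ'pos hZpos
        linarith
    obtain ⟨μ, hμ0, hμiff, hμ1, hμle⟩ := cone_separation w T hT hsupp hdisj
    refine ⟨μ, ⟨hμ0, hμ1⟩, hμiff, ?_⟩
    intro s'
    have hμT0 : ∀ τ ∉ T, μ τ = 0 := by
      intro τ hτ
      have := mt (hμiff τ).1 hτ
      push_neg at this
      exact le_antisymm this (hμ0 τ)
    have hdiff : G.EU i s' μ - G.EU i σ μ = ∑ τ, μ τ * w s' τ := by
      rw [Game.EU, Game.EU, ← Finset.sum_sub_distrib]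
      refine Finset.sum_congr rfl fun τ _ => ?_
      by_cases hτ : τ ∈ T
      · rw [hw]; simp only [hτ, if_pos, hg]; ring
      · rw [hμT0 τ hτ]; ring
    have := hμle s'
    linarith
  · -- easy direction: best response to full-support belief → undominated
    rintro ⟨μ, ⟨hμ0, hμ1⟩, hμiff, hBR⟩ ⟨m, ⟨hm0, hm1⟩, hge, τ', hτ'T, hlt⟩
    have hμT0 : ∀ τ ∉ T, μ τ = 0 := by
      intro τ hτ
      have := mt (hμiff τ).1 hτ
      push_neg at this
      exact le_antisymm this (hμ0 τ)
    have h1 : G.EU i σ μ < ∑ τ, μ τ * G.EUmix i m τ := by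
      rw [Game.EU]
      refine Finset.sum_lt_sum (fun τ _ => ?_)
        ⟨τ', Finset.mem_univ _, mul_lt_mul_of_pos_left hlt ((hμiff τ').2 hτ'T)⟩
      by_cases hτ : τ ∈ T
      · exact mul_le_mul_of_nonneg_left (hge τ hτ) (hμ0 τ)
      · rw [hμT0 τ hτ, zero_mul, zero_mul]
    have h2 : ∑ τ, μ τ * G.EUmix i m τ = ∑ s, m s * G.EU i s μ := by
      simp only [Game.EUmix, Game.EU, Finset.mul_sum]
      rw [Finset.sum_comm]
      refine Finset.sum_congr rfl fun s _ => Finset.sum_congr rfl fun τ _ => by ring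
    have h3 : ∑ s, m s * G.EU i s μ ≤ ∑ s, m s * G.EU i σ μ :=
      Finset.sum_le_sum fun s _ => mul_le_mul_of_nonneg_left (hBR s) (hm0 s)
    have h4 : ∑ s, m s * G.EU i σ μ = G.EU i σ μ := by
      rw [← Finset.sum_mul, hm1, one_mul]
    linarith
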